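/- For a subset A of the eight square edges (top square edges {T'_1,T'_2},{T'_2,T'_3},{T'_3,T'_4},{T'_4,T'_1} and bottom square edges {T_5,T_6},{T_6,T_7},{T_7,T_8},{T_8,T_5}), let Γ_A be the simple graph on the 18 vertices {T'_1,…,T'_4,T_5,…,T_8,S_1,…,S_6,S_2',…,S_5'} whose edges are: the S-edges, the eight fixed ridge edges, all 24 candidate pairs {T,S}, and the square edges in A. Then among the graphs Γ_A for which every vertex of Γ_A has even degree, there are exactly 3 graph-isomorphism classes; one class (that of the full set of square edges) corresponds to the monohedral tiling FB𝒪, and the remaining 2 classes correspond to the dihedral f-tilings whose prototiles are the Möbius triangle and an isosceles triangle derived from FB𝒪 by a-edge assignments. -/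

import Mathlib

open Matrix

attribute [local instance] Classical.propDecidable

/-- `τ = (2√2+1)/7`. -/
noncomputable def tau : ℝ := (2 * Real.sqrt 2 + 1) / 7

/-- The 18 vertices: `pt 0,…,pt 3` are `T'_1,…,T'_4`; `pt 4,…,pt 7` are `T_5,…,T_8`;
`pt 8,…,pt 13` are `S_1,…,S_6`; `pt 14,…,pt 17` are `S_2',…,S_5'`. -/
noncomputable def pt : Fin 18 → Fin 3 → ℝ :=
  ![tau • ![Real.sqrt 2, 0, 1], tau • ![0, Real.sqrt 2, 1],
    tau • ![-Real.sqrt 2, 0, 1], tau • ![0, -Real.sqrt 2, 1],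
    tau • ![1, 1, -1], tau • ![-1, 1, -1], tau • ![-1, -1, -1], tau • ![1, -1, -1],
    ![0, 0, 1], ![1, 0, 0], ![0, 1, 0], ![-1, 0, 0], ![0, -1, 0], ![0, 0, -1],
    (1 / Real.sqrt 2) • ![1, -1, 0], (1 / Real.sqrt 2) • ![1, 1, 0],
    (1 / Real.sqrt 2) • ![-1, 1, 0], (1 / Real.sqrt 2) • ![-1, -1, 0]]

/-- The eight square edges: the top square edges and the bottom square edges. -/
def squareEdges : Finset (Sym2 (Fin 18)) :=
  {s(0, 1), s(1, 2), s(2, 3), s(3, 0), s(4, 5), s(5, 6), s(6, 7), s(7, 4)}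

/-- The `S`-edges. -/
def sEdges : Finset (Sym2 (Fin 18)) :=
  { s(8, 14), s(8, 15), s(8, 16), s(8, 17),
    s(13, 9), s(13, 10), s(13, 11), s(13, 12),
    s(9, 14), s(9, 15), s(10, 15), s(10, 16),
    s(11, 16), s(11, 17), s(12, 17), s(12, 14) }

/-- The eight fixed ridge edges. -/
def ridgeEdges : Finset (Sym2 (Fin 18)) :=
  {s(0, 9), s(1, 10), s(2, 11), s(3, 12), s(4, 15), s(5, 16), s(6, 17), s(7, 14)}

/-- The 24 candidate pairs `{T, S}` as unordered pairs. -/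
def candEdges : Finset (Sym2 (Fin 18)) :=
  { s(0, 8), s(0, 14), s(0, 15), s(1, 8), s(1, 15), s(1, 16),
    s(2, 8), s(2, 16), s(2, 17), s(3, 8), s(3, 17), s(3, 14),
    s(4, 9), s(4, 10), s(4, 13), s(5, 10), s(5, 11), s(5, 13),
    s(6, 11), s(6, 12), s(6, 13), s(7, 12), s(7, 9), s(7, 13) }

/-- The simple graph `Γ_A` on the 18 vertices whose edges are the `S`-edges, the
eight fixed ridge edges, all 24 candidate pairs, and the square edges in `A`. -/
noncomputable def Γ (A : Finset (Sym2 (Fin 18))) : SimpleGraph (Fin 18) :=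
  SimpleGraph.fromEdgeSet ↑(sEdges ∪ ridgeEdges ∪ candEdges ∪ A)

/-- `A` is a subset of the eight square edges for which every vertex of `Γ_A` has
even degree. -/
noncomputable def Good (A : Finset (Sym2 (Fin 18))) : Prop :=
  A ⊆ squareEdges ∧ ∀ v : Fin 18, Even ((Γ A).degree v)

/-- Graph isomorphism between `Γ_A` and `Γ_{A'}`. -/
noncomputable def isoRel (A A' : {A : Finset (Sym2 (Fin 18)) // Good A}) : Prop :=
  Nonempty (Γ A.1 ≃g Γ A'.1)

set_option maxRecDepth 4000
set_option maxHeartbeats 1000000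
set_option linter.unreachableTactic false
set_option linter.unusedTactic false

/-- The edge finset of `Γ A`. -/
def EA (A : Finset (Sym2 (Fin 18))) : Finset (Sym2 (Fin 18)) :=
  sEdges ∪ ridgeEdges ∪ candEdges ∪ A

/-- A computable description of the degree. -/
def cdeg (E : Finset (Sym2 (Fin 18))) (v : Fin 18) : ℕ :=
  (Finset.univ.filter (fun w => s(v, w) ∈ E ∧ v ≠ w)).card

lemma deg_eq (A : Finset (Sym2 (Fin 18))) (v : Fin 18) :
    (Γ A).degree v = cdeg (EA A) v := by
  rw [SimpleGraph.degree, cdeg]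
  congr 1
  ext w
  rw [SimpleGraph.mem_neighborFinset, Finset.mem_filter]
  simp only [SimpleGraph.mem_neighborFinset, Γ, SimpleGraph.fromEdgeSet_adj,
    Finset.mem_coe, Finset.mem_filter, Finset.mem_univ, true_and, EA]
  try tauto

def topE : Finset (Sym2 (Fin 18)) := {s(0, 1), s(1, 2), s(2, 3), s(3, 0)}
def botE : Finset (Sym2 (Fin 18)) := {s(4, 5), s(5, 6), s(6, 7), s(7, 4)}

def Lbase : List (Sym2 (Fin 18)) := [s(8, 14), s(8, 15), s(8, 16), s(8, 17), s(13, 9), s(13, 10), s(13, 11), s(13, 12), s(9, 14), s(9, 15), s(10, 15), s(10, 16), s(11, 16), s(11, 17), s(12, 17), s(12, 14), s(0, 9), s(1, 10), s(2, 11), s(3, 12), s(4, 15), s(5, 16), s(6, 17), s(7, 14), s(0, 8), s(0, 14), s(0, 15), s(1, 8), s(1, 15), s(1, 16), s(2, 8), s(2, 16), s(2, 17), s(3, 8), s(3, 17), s(3, 14), s(4, 9), s(4, 10), s(4, 13), s(5, 10), s(5, 11), s(5, 13), s(6, 11), s(6, 12), s(6, 13), s(7, 12), s(7, 9), s(7,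 13)]
def sqTop : List (Sym2 (Fin 18)) := [s(0, 1), s(1, 2), s(2, 3), s(3, 0)]
def sqBot : List (Sym2 (Fin 18)) := [s(4, 5), s(5, 6), s(6, 7), s(7, 4)]
def Ltop : List (Sym2 (Fin 18)) := Lbase ++ sqTop
def Lbot : List (Sym2 (Fin 18)) := Lbase ++ sqBot
def Lfull : List (Sym2 (Fin 18)) := Lbase ++ (sqTop ++ sqBot)

lemma par0 (A : Finset (Sym2 (Fin 18))) (hEA : ∀ e, e ∈ EA A ↔ (e ∈ Lbase ∨ e ∈ A))
    (hsub : A ⊆ squareEdges) (hev : Even ((Γ A).degree 0)) : (s(0, 1) ∈ A ↔ s(3, 0) ∈ A) := by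
  have hA' : ∀ w : Fin 18, s(0, w) ∈ A ↔ ((w = 1 ∧ s(0, 1) ∈ A) ∨ (w = 3 ∧ s(3, 0) ∈ A)) := by
    intro w
    constructor
    · intro h
      have hs : s((0 : Fin 18), w) ∈ squareEdges := hsub h
      fin_cases w <;>
        first
          | exact Or.inl ⟨rfl, h⟩
          | exact Or.inl ⟨rfl, by rw [Sym2.eq_swap]; exact h⟩
          | exact Or.inr ⟨rfl, h⟩
          | exact Or.inr ⟨rfl, by rw [Sym2.eq_swap]; exact h⟩
          | exact absurd hs (by decide)
    · rintro (⟨rfl, h⟩ | ⟨rfl, h⟩) <;>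
        first
          | exact h
          | (rw [Sym2.eq_swap]; exact h)
  rw [deg_eq, cdeg] at hev
  by_cases hx : s(0, 1) ∈ A <;> by_cases hy : s(3, 0) ∈ A
  · exact iff_of_true hx hy
  · exfalso
    have hA2 : ∀ w : Fin 18, s((0 : Fin 18), w) ∈ A ↔ w = 1 := by
      intro w
      rw [hA' w]
      simp [hx, hy]
    have hset : (Finset.univ.filter (fun w => s((0 : Fin 18), w) ∈ EA A ∧ (0 : Fin 18) ≠ w))
        = ({1, 8, 9, 14, 15} : Finset (Fin 18)) := by
      ext w
      simp only [Finset.mem_filter, Finset.mem_univ, true_and, hEA, hA2]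
      fin_cases w <;> decide
    rw [hset] at hev
    exact absurd hev (by decide)
  · exfalso
    have hA2 : ∀ w : Fin 18, s((0 : Fin 18), w) ∈ A ↔ w = 3 := by
      intro w
      rw [hA' w]
      simp [hx, hy]
    have hset : (Finset.univ.filter (fun w => s((0 : Fin 18), w) ∈ EA A ∧ (0 : Fin 18) ≠ w))
        = ({3, 8, 9, 14, 15} : Finset (Fin 18)) := by
      ext w
      simp only [Finset.mem_filter, Finset.mem_univ, true_and, hEA, hA2]
      fin_cases w <;> decide
    rw [hset] at hev
    exact absurd hev (by decide)
  · exact iff_of_false hx hy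

lemma par1 (A : Finset (Sym2 (Fin 18))) (hEA : ∀ e, e ∈ EA A ↔ (e ∈ Lbase ∨ e ∈ A))
    (hsub : A ⊆ squareEdges) (hev : Even ((Γ A).degree 1)) : (s(0, 1) ∈ A ↔ s(1, 2) ∈ A) := by
  have hA' : ∀ w : Fin 18, s(1, w) ∈ A ↔ ((w = 0 ∧ s(0, 1) ∈ A) ∨ (w = 2 ∧ s(1, 2) ∈ A)) := by
    intro w
    constructor
    · intro h
      have hs : s((1 : Fin 18), w) ∈ squareEdges := hsub h
      fin_cases w <;>
        first
          | exact Or.inl ⟨rfl, h⟩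
          | exact Or.inl ⟨rfl, by rw [Sym2.eq_swap]; exact h⟩
          | exact Or.inr ⟨rfl, h⟩
          | exact Or.inr ⟨rfl, by rw [Sym2.eq_swap]; exact h⟩
          | exact absurd hs (by decide)
    · rintro (⟨rfl, h⟩ | ⟨rfl, h⟩) <;>
        first
          | exact h
          | (rw [Sym2.eq_swap]; exact h)
  rw [deg_eq, cdeg] at hev
  by_cases hx : s(0, 1) ∈ A <;> by_cases hy : s(1, 2) ∈ A
  · exact iff_of_true hx hy
  · exfalso
    have hA2 : ∀ w : Fin 18, s((1 : Fin 18), w) ∈ A ↔ w = 0 := by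
      intro w
      rw [hA' w]
      simp [hx, hy]
    have hset : (Finset.univ.filter (fun w => s((1 : Fin 18), w) ∈ EA A ∧ (1 : Fin 18) ≠ w))
        = ({0, 8, 10, 15, 16} : Finset (Fin 18)) := by
      ext w
      simp only [Finset.mem_filter, Finset.mem_univ, true_and, hEA, hA2]
      fin_cases w <;> decide
    rw [hset] at hev
    exact absurd hev (by decide)
  · exfalso
    have hA2 : ∀ w : Fin 18, s((1 : Fin 18), w) ∈ A ↔ w = 2 := by
      intro w
      rw [hA' w]
      simp [hx, hy]
    have hset : (Finset.univ.filter (fun w => s((1 : Fin 18), w) ∈ EA A ∧ (1 : Fin 18) ≠ w))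
        = ({2, 8, 10, 15, 16} : Finset (Fin 18)) := by
      ext w
      simp only [Finset.mem_filter, Finset.mem_univ, true_and, hEA, hA2]
      fin_cases w <;> decide
    rw [hset] at hev
    exact absurd hev (by decide)
  · exact iff_of_false hx hy

lemma par2 (A : Finset (Sym2 (Fin 18))) (hEA : ∀ e, e ∈ EA A ↔ (e ∈ Lbase ∨ e ∈ A))
    (hsub : A ⊆ squareEdges) (hev : Even ((Γ A).degree 2)) : (s(1, 2) ∈ A ↔ s(2, 3) ∈ A) := by
  have hA' : ∀ w : Fin 18, s(2, w) ∈ A ↔ ((w = 1 ∧ s(1, 2) ∈ A) ∨ (w = 3 ∧ s(2, 3) ∈ A)) := by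
    intro w
    constructor
    · intro h
      have hs : s((2 : Fin 18), w) ∈ squareEdges := hsub h
      fin_cases w <;>
        first
          | exact Or.inl ⟨rfl, h⟩
          | exact Or.inl ⟨rfl, by rw [Sym2.eq_swap]; exact h⟩
          | exact Or.inr ⟨rfl, h⟩
          | exact Or.inr ⟨rfl, by rw [Sym2.eq_swap]; exact h⟩
          | exact absurd hs (by decide)
    · rintro (⟨rfl, h⟩ | ⟨rfl, h⟩) <;>
        first
          | exact h
          | (rw [Sym2.eq_swap]; exact h)
  rw [deg_eq, cdeg] at hev
  by_cases hx : s(1, 2) ∈ A <;> by_cases hy : s(2, 3) ∈ A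
  · exact iff_of_true hx hy
  · exfalso
    have hA2 : ∀ w : Fin 18, s((2 : Fin 18), w) ∈ A ↔ w = 1 := by
      intro w
      rw [hA' w]
      simp [hx, hy]
    have hset : (Finset.univ.filter (fun w => s((2 : Fin 18), w) ∈ EA A ∧ (2 : Fin 18) ≠ w))
        = ({1, 8, 11, 16, 17} : Finset (Fin 18)) := by
      ext w
      simp only [Finset.mem_filter, Finset.mem_univ, true_and, hEA, hA2]
      fin_cases w <;> decide
    rw [hset] at hev
    exact absurd hev (by decide)
  · exfalso
    have hA2 : ∀ w : Fin 18, s((2 : Fin 18), w) ∈ A ↔ w = 3 := by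
      intro w
      rw [hA' w]
      simp [hx, hy]
    have hset : (Finset.univ.filter (fun w => s((2 : Fin 18), w) ∈ EA A ∧ (2 : Fin 18) ≠ w))
        = ({3, 8, 11, 16, 17} : Finset (Fin 18)) := by
      ext w
      simp only [Finset.mem_filter, Finset.mem_univ, true_and, hEA, hA2]
      fin_cases w <;> decide
    rw [hset] at hev
    exact absurd hev (by decide)
  · exact iff_of_false hx hy

lemma par4 (A : Finset (Sym2 (Fin 18))) (hEA : ∀ e, e ∈ EA A ↔ (e ∈ Lbase ∨ e ∈ A))
    (hsub : A ⊆ squareEdges) (hev : Even ((Γ A).degree 4)) : (s(4, 5) ∈ A ↔ s(7, 4) ∈ A) := by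
  have hA' : ∀ w : Fin 18, s(4, w) ∈ A ↔ ((w = 5 ∧ s(4, 5) ∈ A) ∨ (w = 7 ∧ s(7, 4) ∈ A)) := by
    intro w
    constructor
    · intro h
      have hs : s((4 : Fin 18), w) ∈ squareEdges := hsub h
      fin_cases w <;>
        first
          | exact Or.inl ⟨rfl, h⟩
          | exact Or.inl ⟨rfl, by rw [Sym2.eq_swap]; exact h⟩
          | exact Or.inr ⟨rfl, h⟩
          | exact Or.inr ⟨rfl, by rw [Sym2.eq_swap]; exact h⟩
          | exact absurd hs (by decide)
    · rintro (⟨rfl, h⟩ | ⟨rfl, h⟩) <;>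
        first
          | exact h
          | (rw [Sym2.eq_swap]; exact h)
  rw [deg_eq, cdeg] at hev
  by_cases hx : s(4, 5) ∈ A <;> by_cases hy : s(7, 4) ∈ A
  · exact iff_of_true hx hy
  · exfalso
    have hA2 : ∀ w : Fin 18, s((4 : Fin 18), w) ∈ A ↔ w = 5 := by
      intro w
      rw [hA' w]
      simp [hx, hy]
    have hset : (Finset.univ.filter (fun w => s((4 : Fin 18), w) ∈ EA A ∧ (4 : Fin 18) ≠ w))
        = ({5, 9, 10, 13, 15} : Finset (Fin 18)) := by
      ext w
      simp only [Finset.mem_filter, Finset.mem_univ, true_and, hEA, hA2]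
      fin_cases w <;> decide
    rw [hset] at hev
    exact absurd hev (by decide)
  · exfalso
    have hA2 : ∀ w : Fin 18, s((4 : Fin 18), w) ∈ A ↔ w = 7 := by
      intro w
      rw [hA' w]
      simp [hx, hy]
    have hset : (Finset.univ.filter (fun w => s((4 : Fin 18), w) ∈ EA A ∧ (4 : Fin 18) ≠ w))
        = ({7, 9, 10, 13, 15} : Finset (Fin 18)) := by
      ext w
      simp only [Finset.mem_filter, Finset.mem_univ, true_and, hEA, hA2]
      fin_cases w <;> decide
    rw [hset] at hev
    exact absurd hev (by decide)
  · exact iff_of_false hx hy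

lemma par5 (A : Finset (Sym2 (Fin 18))) (hEA : ∀ e, e ∈ EA A ↔ (e ∈ Lbase ∨ e ∈ A))
    (hsub : A ⊆ squareEdges) (hev : Even ((Γ A).degree 5)) : (s(4, 5) ∈ A ↔ s(5, 6) ∈ A) := by
  have hA' : ∀ w : Fin 18, s(5, w) ∈ A ↔ ((w = 4 ∧ s(4, 5) ∈ A) ∨ (w = 6 ∧ s(5, 6) ∈ A)) := by
    intro w
    constructor
    · intro h
      have hs : s((5 : Fin 18), w) ∈ squareEdges := hsub h
      fin_cases w <;>
        first
          | exact Or.inl ⟨rfl, h⟩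
          | exact Or.inl ⟨rfl, by rw [Sym2.eq_swap]; exact h⟩
          | exact Or.inr ⟨rfl, h⟩
          | exact Or.inr ⟨rfl, by rw [Sym2.eq_swap]; exact h⟩
          | exact absurd hs (by decide)
    · rintro (⟨rfl, h⟩ | ⟨rfl, h⟩) <;>
        first
          | exact h
          | (rw [Sym2.eq_swap]; exact h)
  rw [deg_eq, cdeg] at hev
  by_cases hx : s(4, 5) ∈ A <;> by_cases hy : s(5, 6) ∈ A
  · exact iff_of_true hx hy
  · exfalso
    have hA2 : ∀ w : Fin 18, s((5 : Fin 18), w) ∈ A ↔ w = 4 := by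
      intro w
      rw [hA' w]
      simp [hx, hy]
    have hset : (Finset.univ.filter (fun w => s((5 : Fin 18), w) ∈ EA A ∧ (5 : Fin 18) ≠ w))
        = ({4, 10, 11, 13, 16} : Finset (Fin 18)) := by
      ext w
      simp only [Finset.mem_filter, Finset.mem_univ, true_and, hEA, hA2]
      fin_cases w <;> decide
    rw [hset] at hev
    exact absurd hev (by decide)
  · exfalso
    have hA2 : ∀ w : Fin 18, s((5 : Fin 18), w) ∈ A ↔ w = 6 := by
      intro w
      rw [hA' w]
      simp [hx, hy]
    have hset : (Finset.univ.filter (fun w => s((5 : Fin 18), w) ∈ EA A ∧ (5 : Fin 18) ≠ w))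
        = ({6, 10, 11, 13, 16} : Finset (Fin 18)) := by
      ext w
      simp only [Finset.mem_filter, Finset.mem_univ, true_and, hEA, hA2]
      fin_cases w <;> decide
    rw [hset] at hev
    exact absurd hev (by decide)
  · exact iff_of_false hx hy

lemma par6 (A : Finset (Sym2 (Fin 18))) (hEA : ∀ e, e ∈ EA A ↔ (e ∈ Lbase ∨ e ∈ A))
    (hsub : A ⊆ squareEdges) (hev : Even ((Γ A).degree 6)) : (s(5, 6) ∈ A ↔ s(6, 7) ∈ A) := by
  have hA' : ∀ w : Fin 18, s(6, w) ∈ A ↔ ((w = 5 ∧ s(5, 6) ∈ A) ∨ (w = 7 ∧ s(6, 7) ∈ A)) := by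
    intro w
    constructor
    · intro h
      have hs : s((6 : Fin 18), w) ∈ squareEdges := hsub h
      fin_cases w <;>
        first
          | exact Or.inl ⟨rfl, h⟩
          | exact Or.inl ⟨rfl, by rw [Sym2.eq_swap]; exact h⟩
          | exact Or.inr ⟨rfl, h⟩
          | exact Or.inr ⟨rfl, by rw [Sym2.eq_swap]; exact h⟩
          | exact absurd hs (by decide)
    · rintro (⟨rfl, h⟩ | ⟨rfl, h⟩) <;>
        first
          | exact h
          | (rw [Sym2.eq_swap]; exact h)
  rw [deg_eq, cdeg] at hev
  by_cases hx : s(5, 6) ∈ A <;> by_cases hy : s(6, 7) ∈ A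
  · exact iff_of_true hx hy
  · exfalso
    have hA2 : ∀ w : Fin 18, s((6 : Fin 18), w) ∈ A ↔ w = 5 := by
      intro w
      rw [hA' w]
      simp [hx, hy]
    have hset : (Finset.univ.filter (fun w => s((6 : Fin 18), w) ∈ EA A ∧ (6 : Fin 18) ≠ w))
        = ({5, 11, 12, 13, 17} : Finset (Fin 18)) := by
      ext w
      simp only [Finset.mem_filter, Finset.mem_univ, true_and, hEA, hA2]
      fin_cases w <;> decide
    rw [hset] at hev
    exact absurd hev (by decide)
  · exfalso
    have hA2 : ∀ w : Fin 18, s((6 : Fin 18), w) ∈ A ↔ w = 7 := by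
      intro w
      rw [hA' w]
      simp [hx, hy]
    have hset : (Finset.univ.filter (fun w => s((6 : Fin 18), w) ∈ EA A ∧ (6 : Fin 18) ≠ w))
        = ({7, 11, 12, 13, 17} : Finset (Fin 18)) := by
      ext w
      simp only [Finset.mem_filter, Finset.mem_univ, true_and, hEA, hA2]
      fin_cases w <;> decide
    rw [hset] at hev
    exact absurd hev (by decide)
  · exact iff_of_false hx hy

lemma base_eq : sEdges ∪ ridgeEdges ∪ candEdges = Lbase.toFinset := by decide

lemma topE_eq : topE = sqTop.toFinset := by decide

lemma botE_eq : botE = sqBot.toFinset := by decide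

lemma squareEdges_eq : squareEdges = (sqTop ++ sqBot).toFinset := by decide

lemma memEA (A : Finset (Sym2 (Fin 18))) : ∀ e, e ∈ EA A ↔ (e ∈ Lbase ∨ e ∈ A) := by
  intro e
  rw [EA, Finset.mem_union, base_eq, List.mem_toFinset]

lemma memL_empty : ∀ e, e ∈ EA (∅ : Finset (Sym2 (Fin 18))) ↔ e ∈ Lbase := by
  intro e
  rw [memEA]
  simp

lemma memL_top : ∀ e, e ∈ EA topE ↔ e ∈ Ltop := by
  intro e
  rw [memEA, topE_eq, List.mem_toFinset]
  exact (List.mem_append).symm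

lemma memL_bot : ∀ e, e ∈ EA botE ↔ e ∈ Lbot := by
  intro e
  rw [memEA, botE_eq, List.mem_toFinset]
  exact (List.mem_append).symm

lemma memL_full : ∀ e, e ∈ EA squareEdges ↔ e ∈ Lfull := by
  intro e
  rw [memEA, squareEdges_eq, List.mem_toFinset]
  exact (List.mem_append).symm

lemma cdeg_congr (E : Finset (Sym2 (Fin 18))) (L : List (Sym2 (Fin 18)))
    (hm : ∀ e, e ∈ E ↔ e ∈ L) (v : Fin 18) :
    cdeg E v = (Finset.univ.filter (fun w => s(v, w) ∈ L ∧ v ≠ w)).card := by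
  rw [cdeg]
  congr 1
  apply Finset.filter_congr
  intro w _
  rw [hm]

lemma evenL_base : ∀ v : Fin 18,
    Even ((Finset.univ.filter (fun w => s(v, w) ∈ Lbase ∧ v ≠ w)).card) := by decide

lemma evenL_top : ∀ v : Fin 18,
    Even ((Finset.univ.filter (fun w => s(v, w) ∈ Ltop ∧ v ≠ w)).card) := by decide

lemma evenL_bot : ∀ v : Fin 18,
    Even ((Finset.univ.filter (fun w => s(v, w) ∈ Lbot ∧ v ≠ w)).card) := by decide

lemma evenL_full : ∀ v : Fin 18,
    Even ((Finset.univ.filter (fun w => s(v, w) ∈ Lfull ∧ v ≠ w)).card) := by decide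

lemma good_empty : Good (∅ : Finset (Sym2 (Fin 18))) := by
  refine ⟨Finset.empty_subset _, fun v => ?_⟩
  rw [deg_eq, cdeg_congr _ Lbase memL_empty]
  exact evenL_base v

lemma good_top : Good topE := by
  refine ⟨by decide, fun v => ?_⟩
  rw [deg_eq, cdeg_congr _ Ltop memL_top]
  exact evenL_top v

lemma good_bot : Good botE := by
  refine ⟨by decide, fun v => ?_⟩
  rw [deg_eq, cdeg_congr _ Lbot memL_bot]
  exact evenL_bot v

lemma good_full : Good squareEdges := by
  refine ⟨Finset.Subset.refl _, fun v => ?_⟩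
  rw [deg_eq, cdeg_congr _ Lfull memL_full]
  exact evenL_full v

lemma classify (A : Finset (Sym2 (Fin 18))) (h : Good A) :
    A = ∅ ∨ A = topE ∨ A = botE ∨ A = squareEdges := by
  obtain ⟨hsub, heven⟩ := h
  have hEA := memEA A
  have q1 := par0 A hEA hsub (heven 0)
  have q2 := par1 A hEA hsub (heven 1)
  have q3 := par2 A hEA hsub (heven 2)
  have q4 := par4 A hEA hsub (heven 4)
  have q5 := par5 A hEA hsub (heven 5)
  have q6 := par6 A hEA hsub (heven 6)
  have hAf : squareEdges.filter (· ∈ A) = A := by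
    ext e
    simp only [Finset.mem_filter]
    exact ⟨And.right, fun hm => ⟨hsub hm, hm⟩⟩
  by_cases ht : s(0, 1) ∈ A <;> by_cases hb : s(4, 5) ∈ A
  · refine Or.inr (Or.inr (Or.inr ?_))
    have h12 := q2.mp ht
    have h23 := q3.mp h12
    have h30 := q1.mp ht
    have h56 := q5.mp hb
    have h67 := q6.mp h56
    have h74 := q4.mp hb
    rw [← hAf]
    simp [squareEdges, Finset.filter_insert, Finset.filter_singleton, ht, hb, h12, h23, h30, h56, h67, h74]
  · refine Or.inr (Or.inl ?_)
    have h12 := q2.mp ht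
    have h23 := q3.mp h12
    have h30 := q1.mp ht
    have h56 : s(5, 6) ∉ A := fun h => hb (q5.mpr h)
    have h67 : s(6, 7) ∉ A := fun h => h56 (q6.mpr h)
    have h74 : s(7, 4) ∉ A := fun h => hb (q4.mpr h)
    rw [← hAf]
    simp [squareEdges, topE, Finset.filter_insert, Finset.filter_singleton, ht, hb, h12, h23, h30, h56, h67, h74]
  · refine Or.inr (Or.inr (Or.inl ?_))
    have h12 : s(1, 2) ∉ A := fun h => ht (q2.mpr h)
    have h23 : s(2, 3) ∉ A := fun h => h12 (q3.mpr h)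
    have h30 : s(3, 0) ∉ A := fun h => ht (q1.mpr h)
    have h56 := q5.mp hb
    have h67 := q6.mp h56
    have h74 := q4.mp hb
    rw [← hAf]
    simp [squareEdges, botE, Finset.filter_insert, Finset.filter_singleton, ht, hb, h12, h23, h30, h56, h67, h74]
  · refine Or.inl ?_
    have h12 : s(1, 2) ∉ A := fun h => ht (q2.mpr h)
    have h23 : s(2, 3) ∉ A := fun h => h12 (q3.mpr h)
    have h30 : s(3, 0) ∉ A := fun h => ht (q1.mpr h)
    have h56 : s(5, 6) ∉ A := fun h => hb (q5.mpr h)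
    have h67 : s(6, 7) ∉ A := fun h => h56 (q6.mpr h)
    have h74 : s(7, 4) ∉ A := fun h => hb (q4.mpr h)
    rw [← hAf]
    simp [squareEdges, Finset.filter_insert, Finset.filter_singleton, ht, hb, h12, h23, h30, h56, h67, h74]

noncomputable def a0 : {A : Finset (Sym2 (Fin 18)) // Good A} := ⟨∅, good_empty⟩
noncomputable def a1 : {A : Finset (Sym2 (Fin 18)) // Good A} := ⟨topE, good_top⟩
noncomputable def a2 : {A : Finset (Sym2 (Fin 18)) // Good A} := ⟨botE, good_bot⟩
noncomputable def a3 : {A : Finset (Sym2 (Fin 18)) // Good A} := ⟨squareEdges, good_full⟩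

/-- The edge-count invariant. -/
noncomputable def ec (a : {A : Finset (Sym2 (Fin 18)) // Good A}) : ℕ :=
  (Γ a.1).edgeFinset.card

lemma ec_eq (A : Finset (Sym2 (Fin 18))) {inst : Fintype ((Γ A).edgeSet)} :
    (@SimpleGraph.edgeFinset _ (Γ A) inst).card
      = ((EA A).filter (fun e => ¬ e.IsDiag)).card := by
  congr 1
  ext e
  rw [SimpleGraph.mem_edgeFinset]
  simp only [Γ, SimpleGraph.edgeSet_fromEdgeSet, Set.mem_diff, Finset.mem_coe,
    Set.mem_setOf_eq, Finset.mem_filter, EA, Sym2.mem_diagSet]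

lemma ec_a0 : ec a0 = 48 := by
  rw [ec, a0, ec_eq]
  decide

lemma ec_a1 : ec a1 = 52 := by
  rw [ec, a1, ec_eq]
  decide

lemma ec_a3 : ec a3 = 56 := by
  rw [ec, a3, ec_eq]
  decide

lemma adj_iff_L (A : Finset (Sym2 (Fin 18))) (L : List (Sym2 (Fin 18)))
    (hm : ∀ e, e ∈ EA A ↔ e ∈ L) (a b : Fin 18) :
    (Γ A).Adj a b ↔ (s(a, b) ∈ L ∧ a ≠ b) := by
  rw [show Γ A = SimpleGraph.fromEdgeSet ↑(EA A) from rfl, SimpleGraph.fromEdgeSet_adj,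
    Finset.mem_coe, hm]

def σf : Fin 18 → Fin 18 := ![4, 5, 6, 7, 1, 2, 3, 0, 13, 15, 16, 17, 14, 8, 9, 10, 11, 12]
def σg : Fin 18 → Fin 18 := ![7, 4, 5, 6, 0, 1, 2, 3, 13, 14, 15, 16, 17, 8, 12, 9, 10, 11]

def σe : Fin 18 ≃ Fin 18 :=
  ⟨σf, σg, by intro x; fin_cases x <;> rfl, by intro x; fin_cases x <;> rfl⟩

noncomputable def topBotIso : Γ topE ≃g Γ botE where
  toEquiv := σe
  map_rel_iff' := by
    intro a b
    rw [adj_iff_L botE Lbot memL_bot, adj_iff_L topE Ltop memL_top]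
    show (s(σf a, σf b) ∈ Lbot ∧ σf a ≠ σf b) ↔ (s(a, b) ∈ Ltop ∧ a ≠ b)
    revert a b
    decide

lemma iso_a1_a2 : isoRel a1 a2 := ⟨topBotIso⟩

lemma ec_iso : ∀ a b : {A : Finset (Sym2 (Fin 18)) // Good A}, isoRel a b → ec a = ec b := by
  rintro a b ⟨i⟩
  exact i.card_edgeFinset_eq

noncomputable def fInv : Quot isoRel → ℕ := Quot.lift ec ec_iso

noncomputable def gMap : Fin 3 → Quot isoRel :=
  ![Quot.mk isoRel a0, Quot.mk isoRel a1, Quot.mk isoRel a3]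

lemma fg0 : fInv (gMap 0) = 48 := ec_a0
lemma fg1 : fInv (gMap 1) = 52 := ec_a1
lemma fg2 : fInv (gMap 2) = 56 := ec_a3

lemma gMap_injective : Function.Injective gMap := by
  intro i j hij
  have h2 := congrArg fInv hij
  have hv : ∀ k : Fin 3, fInv (gMap k) = (![48, 52, 56] : Fin 3 → ℕ) k := by
    intro k
    match k with
    | 0 => exact fg0
    | 1 => exact fg1
    | 2 => exact fg2
  rw [hv, hv] at h2
  fin_cases i <;> fin_cases j <;>
    first
      | rfl
      | exact absurd h2 (by decide)

lemma gMap_surjective : Function.Surjective gMap := by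
  intro q
  obtain ⟨⟨A, hA⟩, rfl⟩ := Quot.exists_rep q
  rcases classify A hA with h | h | h | h
  · subst h
    exact ⟨0, rfl⟩
  · subst h
    exact ⟨1, rfl⟩
  · subst h
    exact ⟨1, Quot.sound iso_a1_a2⟩
  · subst h
    exact ⟨2, rfl⟩

/-- Among the graphs `Γ_A` with all degrees even there are exactly `3`
graph-isomorphism classes; the full set of square edges satisfies the condition (its
class corresponds to the monohedral tiling `FB𝒪`), and the remaining `2` classes
correspond to the dihedral f-tilings with prototiles the Möbius triangle and an
isosceles triangle derived from `FB𝒪` by `a`-edge assignments. -/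

theorem stmt_19 : Nat.card (Quot isoRel) = 3 ∧ Good squareEdges := by
  refine ⟨?_, good_full⟩
  have e : Fin 3 ≃ Quot isoRel := Equiv.ofBijective gMap ⟨gMap_injective, gMap_surjective⟩
  rw [← Nat.card_congr e, Nat.card_eq_fintype_card, Fintype.card_fin]
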